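/- Let G be the discrete Heisenberg group ⟨a,b,c | [a,b]=c, [a,c]=[b,c]=1⟩ (equivalently, the group of upper unitriangular 3×3 integer matrices). Then G_bound(4) equals the center Z(G) of G, which is the infinite cyclic subgroup generated by c. In particular, for every symmetric generating set S of G of cardinality at most 4, l_S(c) ≤ 4. -/

import Mathlib

/-- A finite symmetric generating set of a group. -/
def IsSymmGen {G : Type*} [Group G] (S : Finset G) : Prop :=
  (∀ s ∈ S, s⁻¹ ∈ S) ∧ Subgroup.closure (S : Set G) = ⊤

/-- The word length of `g` with respect to `S`: the least `n` such that
`g` is a product of `n` elements of `S`. -/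
noncomputable def wordLen {G : Type*} [Group G] (S : Finset G) (g : G) : ℕ :=
  sInf {n : ℕ | ∃ w : List G, (∀ s ∈ w, s ∈ S) ∧ w.length = n ∧ w.prod = g}

/-- Elements of uniformly bounded word length. -/
def GBound (G : Type*) [Group G] : Set G :=
  {g | ∃ M : ℕ, 0 < M ∧ ∀ S : Finset G, IsSymmGen S → wordLen S g ≤ M}

/-- Elements of uniformly bounded word length over symmetric generating sets of
cardinality at most `d`. -/
def GBoundD (G : Type*) [Group G] (d : ℕ) : Set G :=
  {g | ∃ M : ℕ, 0 < M ∧ ∀ S : Finset G, IsSymmGen S → S.card ≤ d →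
    wordLen S g ≤ M}

/-- Relations of the Heisenberg group `⟨a,b,c | [a,b] = c, [a,c] = [b,c] = 1⟩`.
Here `0, 1, 2` stand for `a, b, c`. -/
def heisenbergRels : Set (FreeGroup (Fin 3)) :=
  { FreeGroup.of 0 * FreeGroup.of 1 * (FreeGroup.of 0)⁻¹ * (FreeGroup.of 1)⁻¹ *
      (FreeGroup.of 2)⁻¹,
    FreeGroup.of 0 * FreeGroup.of 2 * (FreeGroup.of 0)⁻¹ * (FreeGroup.of 2)⁻¹,
    FreeGroup.of 1 * FreeGroup.of 2 * (FreeGroup.of 1)⁻¹ * (FreeGroup.of 2)⁻¹ }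

/-- The discrete Heisenberg group. -/
abbrev Heisenberg : Type := PresentedGroup heisenbergRels



/-- Concrete model of the Heisenberg group. -/
@[ext]
structure HModel where
  x : ℤ
  y : ℤ
  z : ℤ
deriving DecidableEq

namespace HModel

instance : One HModel := ⟨⟨0, 0, 0⟩⟩
instance : Mul HModel := ⟨fun g h => ⟨g.x + h.x, g.y + h.y, g.z + h.z + g.x * h.y⟩⟩
instance : Inv HModel := ⟨fun g => ⟨-g.x, -g.y, -g.z + g.x * g.y⟩⟩

@[simp] lemma one_x : (1 : HModel).x = 0 := rfl
@[simp] lemma one_y : (1 : HModel).y = 0 := rfl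
@[simp] lemma one_z : (1 : HModel).z = 0 := rfl
@[simp] lemma mul_x (g h : HModel) : (g * h).x = g.x + h.x := rfl
@[simp] lemma mul_y (g h : HModel) : (g * h).y = g.y + h.y := rfl
@[simp] lemma mul_z (g h : HModel) : (g * h).z = g.z + h.z + g.x * h.y := rfl
@[simp] lemma inv_x (g : HModel) : (g⁻¹).x = -g.x := rfl
@[simp] lemma inv_y (g : HModel) : (g⁻¹).y = -g.y := rfl
@[simp] lemma inv_z (g : HModel) : (g⁻¹).z = -g.z + g.x * g.y := rfl
@[simp] lemma mk_x (a b c : ℤ) : (HModel.mk a b c).x = a := rfl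
@[simp] lemma mk_y (a b c : ℤ) : (HModel.mk a b c).y = b := rfl
@[simp] lemma mk_z (a b c : ℤ) : (HModel.mk a b c).z = c := rfl

instance : Group HModel where
  mul_assoc g h k := by ext <;> simp <;> ring
  one_mul g := by ext <;> simp
  mul_one g := by ext <;> simp
  inv_mul_cancel g := by ext <;> simp <;> ring

def A : HModel := ⟨1, 0, 0⟩
def B : HModel := ⟨0, 1, 0⟩
def C : HModel := ⟨0, 0, 1⟩

lemma pow_xy (g : HModel) : ∀ n : ℕ, (g ^ n).x = n * g.x ∧ (g ^ n).y = n * g.y := by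
  intro n
  induction n with
  | zero => simp
  | succ n ih =>
    rw [pow_succ]
    push_cast
    constructor
    · simp [ih.1]; ring
    · simp [ih.2]; ring

lemma zpow_xy (g : HModel) : ∀ k : ℤ, (g ^ k).x = k * g.x ∧ (g ^ k).y = k * g.y := by
  intro k
  obtain ⟨n, rfl | rfl⟩ := k.eq_nat_or_neg
  · rw [zpow_natCast]; exact_mod_cast g.pow_xy n
  · rw [zpow_neg, zpow_natCast]
    have := g.pow_xy n
    refine ⟨?_, ?_⟩ <;> simp [this.1, this.2] <;> ring

lemma A_zpow (k : ℤ) : A ^ k = ⟨k, 0, 0⟩ := by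
  induction k using Int.induction_on with
  | zero => ext <;> simp
  | succ n ih => rw [zpow_add_one, ih]; ext <;> simp [A] <;> ring
  | pred n ih => rw [zpow_sub_one, ih]; ext <;> simp [A] <;> ring

lemma B_zpow (k : ℤ) : B ^ k = ⟨0, k, 0⟩ := by
  induction k using Int.induction_on with
  | zero => ext <;> simp
  | succ n ih => rw [zpow_add_one, ih]; ext <;> simp [B] <;> ring
  | pred n ih => rw [zpow_sub_one, ih]; ext <;> simp [B] <;> ring

lemma C_zpow (k : ℤ) : C ^ k = ⟨0, 0, k⟩ := by
  induction k using Int.induction_on with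
  | zero => ext <;> simp
  | succ n ih => rw [zpow_add_one, ih]; ext <;> simp [C] <;> ring
  | pred n ih => rw [zpow_sub_one, ih]; ext <;> simp [C] <;> ring

lemma decomp (g : HModel) : g = A ^ g.x * B ^ g.y * C ^ (g.z - g.x * g.y) := by
  rw [A_zpow, B_zpow, C_zpow]; ext <;> simp <;> ring

/-- the basic commutator formula -/
lemma commutator_eq (g h : HModel) :
    g * h * g⁻¹ * h⁻¹ = ⟨0, 0, g.x * h.y - h.x * g.y⟩ := by
  ext <;> simp <;> ring

lemma eq_one_of_sq {g : HModel} (h : g * g = 1) : g = 1 := by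
  have h1 := congrArg HModel.x h
  have h2 := congrArg HModel.y h
  have h3 := congrArg HModel.z h
  simp at h1 h2 h3
  have hx : g.x = 0 := by omega
  have hy : g.y = 0 := by omega
  rw [hx, hy] at h3
  ext <;> simp [hx, hy] <;> omega

lemma center_eq : Subgroup.center HModel = Subgroup.zpowers C := by
  ext g
  rw [Subgroup.mem_center_iff, Subgroup.mem_zpowers_iff]
  constructor
  · intro h
    have h1 := congrArg HModel.z (h A)
    have h2 := congrArg HModel.z (h B)
    simp [A, B] at h1 h2
    exact ⟨g.z, by rw [C_zpow]; ext <;> simp <;> omega⟩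
  · rintro ⟨k, rfl⟩ h
    rw [C_zpow]; ext <;> simp <;> ring

lemma C_not_finOrder : ¬ IsOfFinOrder C := by
  rw [isOfFinOrder_iff_pow_eq_one]
  rintro ⟨n, hn, h⟩
  have h2 := congrArg HModel.z h
  have := (C.pow_xy n)
  rw [show (C ^ n : HModel) = ⟨0,0,(n:ℤ)⟩ from by
    rw [← zpow_natCast, C_zpow]] at h2
  simp at h2
  omega

end HModel

namespace Heis

def a : Heisenberg := PresentedGroup.of 0
def b : Heisenberg := PresentedGroup.of 1
def c : Heisenberg := PresentedGroup.of 2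

lemma rel_eq_one {r : FreeGroup (Fin 3)} (hr : r ∈ heisenbergRels) :
    PresentedGroup.mk heisenbergRels r = 1 := by
  have : r ∈ Subgroup.normalClosure heisenbergRels := Subgroup.subset_normalClosure hr
  exact (QuotientGroup.eq_one_iff r).mpr this

lemma rel1 : a * b * a⁻¹ * b⁻¹ = c := by
  have h := rel_eq_one (r := FreeGroup.of 0 * FreeGroup.of 1 * (FreeGroup.of 0)⁻¹ *
      (FreeGroup.of 1)⁻¹ * (FreeGroup.of 2)⁻¹) (by simp [heisenbergRels])
  simp only [map_mul, map_inv] at h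
  exact mul_inv_eq_one.mp h

lemma rel2 : Commute a c := by
  have h := rel_eq_one (r := FreeGroup.of 0 * FreeGroup.of 2 * (FreeGroup.of 0)⁻¹ *
      (FreeGroup.of 2)⁻¹) (by simp [heisenbergRels])
  simp only [map_mul, map_inv] at h
  have h2 : a * c * a⁻¹ = c := mul_inv_eq_one.mp h
  have : a * c * a⁻¹ * a = c * a := by rw [h2]
  rw [inv_mul_cancel_right] at this
  exact this

lemma rel3 : Commute b c := by
  have h := rel_eq_one (r := FreeGroup.of 1 * FreeGroup.of 2 * (FreeGroup.of 1)⁻¹ *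
      (FreeGroup.of 2)⁻¹) (by simp [heisenbergRels])
  simp only [map_mul, map_inv] at h
  have h2 : b * c * b⁻¹ = c := mul_inv_eq_one.mp h
  have : b * c * b⁻¹ * b = c * b := by rw [h2]
  rw [inv_mul_cancel_right] at this
  exact this

lemma comm_c_azpow (x : ℤ) : Commute (a ^ x) c := (rel2.zpow_left x)
lemma comm_c_bzpow (y : ℤ) : Commute (b ^ y) c := (rel3.zpow_left y)
lemma comm_c_czpow (x y : ℤ) : Commute (c ^ x) (c ^ y) := (Commute.refl c).zpow_zpow x y


lemma conj_ab : a * b * a⁻¹ = c * b := by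
  have h : a * b * a⁻¹ * b⁻¹ * b = c * b := by rw [rel1]
  rwa [inv_mul_cancel_right] at h

lemma conj_b_zpow (y : ℤ) : a * b ^ y * a⁻¹ = c ^ y * b ^ y := by
  rw [← conj_zpow, conj_ab, rel3.symm.mul_zpow]

lemma conj_b_zpow' (y : ℤ) : a⁻¹ * b ^ y * a = c ^ (-y) * b ^ y := by
  have hca : a⁻¹ * c ^ y = c ^ y * a⁻¹ := ((rel2.symm.zpow_left y).inv_right).eq.symm
  have h : b ^ y = c ^ y * (a⁻¹ * b ^ y * a) := by
    calc b ^ y = a⁻¹ * (a * b ^ y * a⁻¹) * a := by group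
      _ = a⁻¹ * (c ^ y * b ^ y) * a := by rw [conj_b_zpow]
      _ = (a⁻¹ * c ^ y) * b ^ y * a := by group
      _ = (c ^ y * a⁻¹) * b ^ y * a := by rw [hca]
      _ = c ^ y * (a⁻¹ * b ^ y * a) := by group
  rw [zpow_neg]
  exact eq_inv_mul_iff_mul_eq.mpr h.symm

lemma conj_pow_b (x y : ℤ) : a ^ x * b ^ y * a ^ (-x) = c ^ (x * y) * b ^ y := by
  induction x using Int.induction_on with
  | zero => simp
  | succ n ih =>
    have e1 : a ^ ((n : ℤ) + 1) = a * a ^ (n : ℤ) := by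
      rw [add_comm, zpow_add, zpow_one]
    have e2 : a ^ (-((n : ℤ) + 1)) = a ^ (-(n : ℤ)) * a⁻¹ := by
      rw [neg_add, zpow_add, zpow_neg_one]
    rw [e1, e2]
    calc a * a ^ (n:ℤ) * b ^ y * (a ^ (-(n:ℤ)) * a⁻¹)
        = a * (a ^ (n:ℤ) * b ^ y * a ^ (-(n:ℤ))) * a⁻¹ := by group
      _ = a * (c ^ ((n:ℤ) * y) * b ^ y) * a⁻¹ := by rw [ih]
      _ = (a * c ^ ((n:ℤ)*y) * a⁻¹) * (a * b ^ y * a⁻¹) := by group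
      _ = c ^ ((n:ℤ)*y) * (c ^ y * b ^ y) := by
          rw [conj_b_zpow, (rel2.zpow_right ((n:ℤ)*y)).eq]; group
      _ = c ^ (((n:ℤ)+1) * y) * b ^ y := by rw [← mul_assoc, ← zpow_add]; ring_nf
  | pred n ih =>
    have e1 : a ^ ((-n : ℤ) - 1) = a⁻¹ * a ^ (-n : ℤ) := by
      rw [sub_eq_add_neg, add_comm, zpow_add, zpow_neg_one]
    have e2 : a ^ (-((-n : ℤ) - 1)) = a ^ (-(-n : ℤ)) * a := by
      rw [show -((-n:ℤ) - 1) = -(-n:ℤ) + 1 by ring, zpow_add, zpow_one]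
    rw [e1, e2]
    calc a⁻¹ * a ^ (-n:ℤ) * b ^ y * (a ^ (-(-n:ℤ)) * a)
        = a⁻¹ * (a ^ (-n:ℤ) * b ^ y * a ^ (-(-n:ℤ))) * a := by group
      _ = a⁻¹ * (c ^ ((-n:ℤ) * y) * b ^ y) * a := by rw [ih]
      _ = (a⁻¹ * c ^ ((-n:ℤ)*y) * a) * (a⁻¹ * b ^ y * a) := by group
      _ = c ^ ((-n:ℤ)*y) * (c ^ (-y) * b ^ y) := by
          rw [conj_b_zpow', ((rel2.zpow_right ((-n:ℤ)*y)).inv_left).eq]; group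
      _ = c ^ (((-n:ℤ) - 1) * y) * b ^ y := by rw [← mul_assoc, ← zpow_add]; ring_nf

lemma swap_ba (y x : ℤ) : b ^ y * a ^ x = a ^ x * c ^ (-(x * y)) * b ^ y := by
  have h := conj_pow_b (-x) y
  rw [neg_neg] at h
  calc b ^ y * a ^ x = a ^ x * (a ^ (-x) * b ^ y * a ^ x) := by group
    _ = a ^ x * (c ^ (-x * y) * b ^ y) := by rw [h]
    _ = a ^ x * c ^ (-(x * y)) * b ^ y := by rw [neg_mul, ← mul_assoc]

/-- normal form element -/
def σ (x y z : ℤ) : Heisenberg := a ^ x * b ^ y * c ^ (z - x * y)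

lemma hca (w u : ℤ) : c ^ w * a ^ u = a ^ u * c ^ w := ((rel2.symm).zpow_zpow w u).eq
lemma hcb (w u : ℤ) : c ^ w * b ^ u = b ^ u * c ^ w := ((rel3.symm).zpow_zpow w u).eq

lemma sigma_mul (x y z x' y' z' : ℤ) :
    σ x y z * σ x' y' z' = σ (x + x') (y + y') (z + z' + x * y') := by
  unfold σ
  calc a^x*b^y*c^(z-x*y) * (a^x'*b^y'*c^(z'-x'*y'))
      = a^x*b^y*(c^(z-x*y) * a^x')*(b^y'*c^(z'-x'*y')) := by group
    _ = a^x*b^y*(a^x' * c^(z-x*y))*(b^y'*c^(z'-x'*y')) := by rw [hca]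
    _ = a^x*(b^y*a^x') * (c^(z-x*y)*b^y')*c^(z'-x'*y') := by group
    _ = a^x*(a^x' * c^(-(x'*y)) * b^y) * (b^y' * c^(z-x*y))*c^(z'-x'*y') := by
        rw [swap_ba, hcb]
    _ = (a^x*a^x') * (c^(-(x'*y)) * (b^y*b^y')) * (c^(z-x*y)*c^(z'-x'*y')) := by group
    _ = a^(x+x') * (c^(-(x'*y)) * b^(y+y')) * (c^(z-x*y)*c^(z'-x'*y')) := by
        rw [← zpow_add, ← zpow_add]
    _ = a^(x+x') * (b^(y+y') * c^(-(x'*y))) * (c^(z-x*y)*c^(z'-x'*y')) := by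
        rw [hcb]
    _ = a^(x+x') * b^(y+y') * (c^(-(x'*y)) * (c^(z-x*y)*c^(z'-x'*y'))) := by group
    _ = a^(x+x') * b^(y+y') * c^(-(x'*y) + (z-x*y + (z'-x'*y'))) := by
        rw [← zpow_add, ← zpow_add]
    _ = a^(x+x') * b^(y+y') * c^(z + z' + x*y' - (x+x')*(y+y')) := by ring_nf

end Heis

namespace Heis

lemma sigma_one : σ 0 0 0 = 1 := by simp [σ]
lemma sigma_a : σ 1 0 0 = a := by simp [σ]
lemma sigma_b : σ 0 1 0 = b := by simp [σ]
lemma sigma_c : σ 0 0 1 = c := by simp [σ]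

lemma sigma_inv (x y z : ℤ) : (σ x y z)⁻¹ = σ (-x) (-y) (x * y - z) := by
  symm
  rw [eq_inv_iff_mul_eq_one, sigma_mul]
  rw [show -x + x = 0 by ring, show -y + y = 0 by ring,
    show x * y - z + z + -x * y = 0 by ring, sigma_one]

lemma sigma_surj (g : Heisenberg) : ∃ x y z : ℤ, σ x y z = g := by
  induction g using PresentedGroup.induction_on with
  | H w =>
    induction w using FreeGroup.induction_on with
    | C1 => exact ⟨0, 0, 0, by simpa using sigma_one⟩
    | of i =>
      fin_cases i
      · exact ⟨1, 0, 0, sigma_a⟩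
      · exact ⟨0, 1, 0, sigma_b⟩
      · exact ⟨0, 0, 1, sigma_c⟩
    | inv_of i ih =>
      obtain ⟨x, y, z, h⟩ := ih
      exact ⟨-x, -y, x * y - z, by rw [← sigma_inv, h, map_inv]⟩
    | mul u v hu hv =>
      obtain ⟨x, y, z, hu⟩ := hu
      obtain ⟨x', y', z', hv⟩ := hv
      exact ⟨x + x', y + y', z + z' + x * y', by rw [← sigma_mul, hu, hv, map_mul]⟩

end Heis

namespace Heis

open HModel

def fgen : Fin 3 → HModel := ![HModel.A, HModel.B, HModel.C]

lemma frels : ∀ r ∈ heisenbergRels, FreeGroup.lift fgen r = 1 := by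
  intro r hr
  rcases hr with h | h | h <;> subst h <;>
    simp only [map_mul, map_inv, FreeGroup.lift_apply_of, fgen] <;>
    · show _ = (1 : HModel)
      norm_num [HModel.A, HModel.B, HModel.C]
      ext <;> simp

def φ : Heisenberg →* HModel := PresentedGroup.toGroup frels

@[simp] lemma φ_a : φ a = HModel.A := PresentedGroup.toGroup.of frels
@[simp] lemma φ_b : φ b = HModel.B := PresentedGroup.toGroup.of frels
@[simp] lemma φ_c : φ c = HModel.C := PresentedGroup.toGroup.of frels

lemma φ_sigma (x y z : ℤ) : φ (σ x y z) = ⟨x, y, z⟩ := by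
  unfold σ
  rw [map_mul, map_mul, map_zpow, map_zpow, map_zpow, φ_a, φ_b, φ_c,
    A_zpow, B_zpow, C_zpow]
  ext <;> simp <;> ring

lemma φ_bijective : Function.Bijective φ := by
  constructor
  · intro g h hgh
    obtain ⟨x, y, z, rfl⟩ := sigma_surj g
    obtain ⟨x', y', z', rfl⟩ := sigma_surj h
    rw [φ_sigma, φ_sigma] at hgh
    obtain ⟨rfl, rfl, rfl⟩ : x = x' ∧ y = y' ∧ z = z' := by
      refine ⟨congrArg HModel.x hgh, congrArg HModel.y hgh, congrArg HModel.z hgh⟩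
    rfl
  · intro g
    exact ⟨σ g.x g.y g.z, by rw [φ_sigma]⟩

noncomputable def e : Heisenberg ≃* HModel := MulEquiv.ofBijective φ φ_bijective

@[simp] lemma e_c : e c = HModel.C := φ_c

end Heis

section WordLen

variable {G : Type*} [Group G]

lemma wordLen_le (S : Finset G) (g : G) (w : List G) (hw : ∀ s ∈ w, s ∈ S)
    (hp : w.prod = g) : wordLen S g ≤ w.length :=
  Nat.sInf_le ⟨w, hw, rfl, hp⟩

lemma exists_word (S : Finset G) (hS : IsSymmGen S) (g : G) :
    ∃ w : List G, (∀ s ∈ w, s ∈ S) ∧ w.prod = g := by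
  have hg : g ∈ Subgroup.closure (S : Set G) := hS.2 ▸ Subgroup.mem_top g
  induction hg using Subgroup.closure_induction with
  | mem s hs => exact ⟨[s], by simpa using hs, by simp⟩
  | one => exact ⟨[], by simp, by simp⟩
  | mul u v _ _ ihu ihv =>
    obtain ⟨w1, h1, h1'⟩ := ihu
    obtain ⟨w2, h2, h2'⟩ := ihv
    refine ⟨w1 ++ w2, ?_, by rw [List.prod_append, h1', h2']⟩
    intro s hs
    rcases List.mem_append.mp hs with h | h
    exacts [h1 s h, h2 s h]
  | inv u _ ihu =>
    obtain ⟨w, h1, h2⟩ := ihu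
    refine ⟨(w.map (·⁻¹)).reverse, ?_, ?_⟩
    · intro s hs
      rw [List.mem_reverse, List.mem_map] at hs
      obtain ⟨t, ht, rfl⟩ := hs
      exact hS.1 t (h1 t ht)
    · rw [List.prod_reverse_noncomm]
      simp only [List.map_map]
      rw [show ((·⁻¹) ∘ (·⁻¹) : G → G) = id from funext fun x => inv_inv x, List.map_id, h2]

lemma exists_min_word (S : Finset G) (hS : IsSymmGen S) (g : G) :
    ∃ w : List G, (∀ s ∈ w, s ∈ S) ∧ w.length = wordLen S g ∧ w.prod = g := by
  have hne : {n : ℕ | ∃ w : List G, (∀ s ∈ w, s ∈ S) ∧ w.length = n ∧ w.prod = g}.Nonempty := by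
    obtain ⟨w, h1, h2⟩ := exists_word S hS g
    exact ⟨w.length, w, h1, rfl, h2⟩
  exact Nat.sInf_mem hne

lemma abs_le_wordLen (S : Finset G) (hS : IsSymmGen S) (g : G) (f : G → ℤ)
    (hf : ∀ u v : G, f (u * v) = f u + f v) (hb : ∀ s ∈ S, |f s| ≤ 1) :
    |f g| ≤ (wordLen S g : ℤ) := by
  have hf1 : f 1 = 0 := by
    have := hf 1 1
    simp at this
    omega
  obtain ⟨w, h1, h2, h3⟩ := exists_min_word S hS g
  subst h3
  rw [← h2]
  clear h2
  induction w with
  | nil => simp [hf1]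
  | cons s w ih =>
    have hs : |f s| ≤ 1 := hb s (h1 s (by simp))
    have ihw := ih (fun t ht => h1 t (by simp [ht]))
    rw [List.prod_cons, hf]
    push_cast
    calc |f s + f w.prod| ≤ |f s| + |f w.prod| := abs_add_le _ _
      _ ≤ 1 + w.length := by omega
      _ = _ := by simp; push_cast; ring

end WordLen


namespace HModel

lemma A_ne_one : A ≠ 1 := by
  intro h
  have := congrArg HModel.x h
  simp [A] at this

def K (u v : HModel) : Subgroup HModel where
  carrier := {g | ∃ m n : ℤ, g.x = m * u.x + n * v.x ∧ g.y = m * u.y + n * v.y}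
  one_mem' := ⟨0, 0, by simp⟩
  mul_mem' := by
    rintro g h ⟨m, n, h1, h2⟩ ⟨m', n', h3, h4⟩
    exact ⟨m + m', n + n', by simp [h1, h3]; ring, by simp [h2, h4]; ring⟩
  inv_mem' := by
    rintro g ⟨m, n, h1, h2⟩
    exact ⟨-m, -n, by simp [h1]; ring, by simp [h2]; ring⟩

lemma eq_one_of_inv_eq_self {g : HModel} (h : g⁻¹ = g) : g = 1 :=
  eq_one_of_sq (by nth_rewrite 1 [← h]; rw [inv_mul_cancel])

lemma struct (S : Finset HModel) (hsym : ∀ s ∈ S, s⁻¹ ∈ S) (hcard : S.card ≤ 4)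
    (hgen : Subgroup.closure (S : Set HModel) = ⊤) :
    ∃ u ∈ S, ∃ v ∈ S, (S : Set HModel) ⊆ {1, u, u⁻¹, v, v⁻¹} := by
  rcases S.eq_empty_or_nonempty with rfl | ⟨u0, hu0⟩
  · exfalso
    rw [Finset.coe_empty, Subgroup.closure_empty] at hgen
    have : A ∈ (⊥ : Subgroup HModel) := hgen ▸ Subgroup.mem_top A
    exact A_ne_one (Subgroup.mem_bot.mp this)
  by_cases h1 : ∃ u ∈ S, u ≠ 1
  · obtain ⟨u, huS, hu1⟩ := h1
    by_cases h2 : ∃ v ∈ S, v ∉ ({1, u, u⁻¹} : Set HModel)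
    · obtain ⟨v, hvS, hv⟩ := h2
      refine ⟨u, huS, v, hvS, ?_⟩
      intro w hwS
      by_contra hw
      simp only [Set.mem_insert_iff, Set.mem_singleton_iff, not_or] at hw hv
      obtain ⟨hw1, hwu, hwui, hwv, hwvi⟩ := hw
      obtain ⟨hv1, hvu, hvui⟩ := hv
      have huu : u ≠ u⁻¹ := fun h => hu1 (eq_one_of_inv_eq_self h.symm)
      have hvv : v ≠ v⁻¹ := fun h => hv1 (eq_one_of_inv_eq_self h.symm)
      have huvi : u ≠ v⁻¹ := fun h => hvui (by rw [h, inv_inv])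
      have huiv : u⁻¹ ≠ v := fun h => hvui h.symm
      have huivi : u⁻¹ ≠ v⁻¹ := fun h => hvu (inv_injective h).symm
      have hsub : ({u, u⁻¹, v, v⁻¹, w} : Finset HModel) ⊆ S := by
        intro s hs
        simp only [Finset.mem_insert, Finset.mem_singleton] at hs
        rcases hs with rfl | rfl | rfl | rfl | rfl
        exacts [huS, hsym u huS, hvS, hsym v hvS, hwS]
      have hc5 : ({u, u⁻¹, v, v⁻¹, w} : Finset HModel).card = 5 := by
        rw [Finset.card_insert_of_notMem (by
          simp only [Finset.mem_insert, Finset.mem_singleton, not_or]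
          exact ⟨huu, Ne.symm hvu, huvi, Ne.symm hwu⟩)]
        rw [Finset.card_insert_of_notMem (by
          simp only [Finset.mem_insert, Finset.mem_singleton, not_or]
          exact ⟨huiv, huivi, Ne.symm hwui⟩)]
        rw [Finset.card_insert_of_notMem (by
          simp only [Finset.mem_insert, Finset.mem_singleton, not_or]
          exact ⟨hvv, Ne.symm hwv⟩)]
        rw [Finset.card_pair (Ne.symm hwvi)]
      have := Finset.card_le_card hsub
      omega
    · push_neg at h2
      refine ⟨u, huS, u, huS, ?_⟩
      intro w hwS
      have := h2 w hwS
      simp only [Set.mem_insert_iff, Set.mem_singleton_iff] at this ⊢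
      tauto
  · push_neg at h1
    refine ⟨u0, hu0, u0, hu0, ?_⟩
    intro w hwS
    simp only [Set.mem_insert_iff, Set.mem_singleton_iff]
    exact Or.inl (h1 w hwS)

end HModel
namespace HModel

lemma key_pair (S : Finset HModel) (hS : IsSymmGen S) (hcard : S.card ≤ 4) :
    ∃ u ∈ S, ∃ v ∈ S, u * v * u⁻¹ * v⁻¹ = C := by
  obtain ⟨u, huS, v, hvS, hsub⟩ := struct S hS.1 hcard hS.2
  have hK : ∀ g : HModel, g ∈ K u v := by
    intro g
    have hle : Subgroup.closure (S : Set HModel) ≤ K u v := by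
      rw [Subgroup.closure_le]
      intro s hs
      rcases hsub hs with rfl | rfl | rfl | rfl | rfl
      · exact (K u v).one_mem
      · exact ⟨1, 0, by simp, by simp⟩
      · exact ⟨-1, 0, by simp, by simp⟩
      · exact ⟨0, 1, by simp, by simp⟩
      · exact ⟨0, -1, by simp, by simp⟩
    exact hle (hS.2 ▸ Subgroup.mem_top g)
  obtain ⟨m, n, e1, e2⟩ := hK A
  obtain ⟨m', n', e3, e4⟩ := hK B
  simp only [A, B, mk_x, mk_y] at e1 e2 e3 e4
  have key : (u.x * v.y - v.x * u.y) * (m * n' - n * m') = 1 := by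
    have expand : (u.x * v.y - v.x * u.y) * (m * n' - n * m') =
        (m * u.x + n * v.x) * (m' * u.y + n' * v.y) -
        (m' * u.x + n' * v.x) * (m * u.y + n * v.y) := by ring
    rw [expand, ← e1, ← e2, ← e3, ← e4]
    ring
  rcases Int.eq_one_or_neg_one_of_mul_eq_one key with hD | hD
  · exact ⟨u, huS, v, hvS, by rw [commutator_eq, hD]; rfl⟩
  · refine ⟨v, hvS, u, huS, ?_⟩
    rw [commutator_eq, show v.x * u.y - u.x * v.y = 1 by omega]
    rfl

end HModel
namespace HModel

lemma commutator_zpow (u v : HModel) (k : ℤ) (hD : u * v * u⁻¹ * v⁻¹ = C) :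
    u ^ k * v * (u ^ k)⁻¹ * v⁻¹ = C ^ k := by
  have hD1 : u.x * v.y - v.x * u.y = 1 := by
    have := congrArg HModel.z (commutator_eq u v ▸ hD)
    simpa [C] using this
  rw [commutator_eq, C_zpow]
  ext <;> simp [(zpow_xy u k).1, (zpow_xy u k).2]
  linear_combination k * hD1

lemma wordLen_Cpow_le (k : ℤ) (S : Finset HModel) (hS : IsSymmGen S)
    (hcard : S.card ≤ 4) : wordLen S (C ^ k) ≤ 2 * k.natAbs + 2 := by
  obtain ⟨u, huS, v, hvS, hc⟩ := key_pair S hS hcard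
  set m := k.natAbs with hm
  set s := if 0 ≤ k then u else u⁻¹ with hs
  have hsS : s ∈ S := by
    rw [hs]; split
    · exact huS
    · exact hS.1 u huS
  have hsiS : s⁻¹ ∈ S := hS.1 s hsS
  have hsm : s ^ m = u ^ k := by
    rw [hs]; split
    · rw [← zpow_natCast]; congr 1; omega
    · rw [inv_pow, ← zpow_natCast, ← zpow_neg]; congr 1; omega
  set w : List HModel := List.replicate m s ++ v :: (List.replicate m s⁻¹ ++ [v⁻¹]) with hw
  have hlen : w.length = 2 * m + 2 := by simp [hw]; omega
  have hmem : ∀ t ∈ w, t ∈ S := by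
    intro t ht
    rw [hw] at ht
    simp only [List.mem_append, List.mem_cons, List.mem_replicate, List.mem_singleton,
      List.not_mem_nil, or_false] at ht
    rcases ht with ⟨-, rfl⟩ | rfl | ⟨-, rfl⟩ | rfl
    exacts [hsS, hvS, hsiS, hS.1 v hvS]
  have hprod : w.prod = C ^ k := by
    rw [hw]
    rw [List.prod_append, List.prod_cons, List.prod_append, List.prod_replicate,
      List.prod_replicate, List.prod_singleton, inv_pow, hsm]
    calc u ^ k * (v * ((u ^ k)⁻¹ * v⁻¹)) = u ^ k * v * (u ^ k)⁻¹ * v⁻¹ := by group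
      _ = C ^ k := commutator_zpow u v k hc
  calc wordLen S (C ^ k) ≤ w.length := wordLen_le S _ w hmem hprod
    _ = 2 * m + 2 := hlen

lemma wordLen_C_le (S : Finset HModel) (hS : IsSymmGen S) (hcard : S.card ≤ 4) :
    wordLen S C ≤ 4 := by
  have := wordLen_Cpow_le 1 S hS hcard
  simpa using this

end HModel
namespace HModel

lemma closure_eq_top_of {s : Set HModel} (hA : A ∈ Subgroup.closure s)
    (hB : B ∈ Subgroup.closure s) (hC : C ∈ Subgroup.closure s) :
    Subgroup.closure s = ⊤ := by
  rw [eq_top_iff]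
  intro g _
  rw [decomp g]
  exact mul_mem (mul_mem (zpow_mem hA _) (zpow_mem hB _)) (zpow_mem hC _)

lemma card_le_four {α : Type*} [DecidableEq α] (a b c d : α) :
    ({a, b, c, d} : Finset α).card ≤ 4 := by
  apply le_trans (Finset.card_insert_le _ _)
  have h2 := Finset.card_insert_le b ({c, d} : Finset α)
  have h3 := Finset.card_insert_le c ({d} : Finset α)
  simp at h3
  omega

lemma unbounded (g : HModel) (hg : ¬(g.x = 0 ∧ g.y = 0)) (M : ℕ) :
    ∃ S : Finset HModel, IsSymmGen S ∧ S.card ≤ 4 ∧ M < wordLen S g := by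
  by_cases hy : g.y = 0
  · -- g.x ≠ 0, use S = {u, u⁻¹, B, B⁻¹} with u = ⟨1, n, 0⟩
    have hx : g.x ≠ 0 := fun h => hg ⟨h, hy⟩
    set n : ℤ := M + |g.x| + 1 with hn
    have hn0 : 0 ≤ n := by positivity
    set u : HModel := ⟨1, n, 0⟩ with hu
    set S : Finset HModel := {u, u⁻¹, B, B⁻¹} with hSdef
    have hmem : ∀ s : HModel, s ∈ S ↔ s = u ∨ s = u⁻¹ ∨ s = B ∨ s = B⁻¹ := by
      intro s; simp [hSdef]
    have hsym : ∀ s ∈ S, s⁻¹ ∈ S := by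
      intro s hs
      rcases (hmem s).mp hs with rfl | rfl | rfl | rfl <;>
        rw [hmem] <;> simp
    have huS : u ∈ S := by rw [hmem]; tauto
    have hBS : B ∈ S := by rw [hmem]; tauto
    have hCcomm : u * B * u⁻¹ * B⁻¹ = C := by
      rw [commutator_eq]; ext <;> simp [hu, B, C]
    have hgen : Subgroup.closure (S : Set HModel) = ⊤ := by
      have hu' : u ∈ Subgroup.closure (S : Set HModel) := Subgroup.subset_closure huS
      have hB' : B ∈ Subgroup.closure (S : Set HModel) := Subgroup.subset_closure hBS
      have hC' : C ∈ Subgroup.closure (S : Set HModel) := by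
        rw [← hCcomm]
        exact mul_mem (mul_mem (mul_mem hu' hB') (inv_mem hu')) (inv_mem hB')
      have hA' : A ∈ Subgroup.closure (S : Set HModel) := by
        have : A = u * B ^ (-n) * C ^ n := by
          rw [B_zpow, C_zpow]; ext <;> simp [hu, A] <;> ring
        rw [this]
        exact mul_mem (mul_mem hu' (zpow_mem hB' _)) (zpow_mem hC' _)
      exact closure_eq_top_of hA' hB' hC'
    refine ⟨S, ⟨hsym, hgen⟩, by rw [hSdef]; exact card_le_four _ _ _ _, ?_⟩
    set f : HModel → ℤ := fun h => h.y - n * h.x with hf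
    have hadd : ∀ p q : HModel, f (p * q) = f p + f q := by
      intro p q; simp [hf]; ring
    have hb : ∀ s ∈ S, |f s| ≤ 1 := by
      intro s hs
      rcases (hmem s).mp hs with rfl | rfl | rfl | rfl <;>
        simp [hf, hu, B] <;> omega
    have hlow := abs_le_wordLen S ⟨hsym, hgen⟩ g f hadd hb
    have hfg : |f g| = n * |g.x| := by
      rw [hf]; simp [hy, abs_mul, abs_of_nonneg hn0]
    have hgx : 1 ≤ |g.x| := by
      rcases abs_pos.mpr hx with h; omega
    have : (M : ℤ) < n * |g.x| := by nlinarith [abs_nonneg g.x]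
    have : (M : ℤ) < wordLen S g := by omega
    exact_mod_cast this
  · -- g.y ≠ 0, use S = {A, A⁻¹, v, v⁻¹} with v = ⟨n, 1, 0⟩
    set n : ℤ := M + |g.x| + 1 with hn
    have hn0 : 0 ≤ n := by positivity
    set v : HModel := ⟨n, 1, 0⟩ with hv
    set S : Finset HModel := {A, A⁻¹, v, v⁻¹} with hSdef
    have hmem : ∀ s : HModel, s ∈ S ↔ s = A ∨ s = A⁻¹ ∨ s = v ∨ s = v⁻¹ := by
      intro s; simp [hSdef]
    have hsym : ∀ s ∈ S, s⁻¹ ∈ S := by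
      intro s hs
      rcases (hmem s).mp hs with rfl | rfl | rfl | rfl <;>
        rw [hmem] <;> simp
    have hAS : A ∈ S := by rw [hmem]; tauto
    have hvS : v ∈ S := by rw [hmem]; tauto
    have hCcomm : A * v * A⁻¹ * v⁻¹ = C := by
      rw [commutator_eq]; ext <;> simp [hv, A, C]
    have hgen : Subgroup.closure (S : Set HModel) = ⊤ := by
      have hA' : A ∈ Subgroup.closure (S : Set HModel) := Subgroup.subset_closure hAS
      have hv' : v ∈ Subgroup.closure (S : Set HModel) := Subgroup.subset_closure hvS
      have hC' : C ∈ Subgroup.closure (S : Set HModel) := by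
        rw [← hCcomm]
        exact mul_mem (mul_mem (mul_mem hA' hv') (inv_mem hA')) (inv_mem hv')
      have hB' : B ∈ Subgroup.closure (S : Set HModel) := by
        have : B = v * A ^ (-n) := by
          rw [A_zpow]; ext <;> simp [hv, B]
        rw [this]
        exact mul_mem hv' (zpow_mem hA' _)
      exact closure_eq_top_of hA' hB' hC'
    refine ⟨S, ⟨hsym, hgen⟩, by rw [hSdef]; exact card_le_four _ _ _ _, ?_⟩
    set f : HModel → ℤ := fun h => h.x - n * h.y with hf
    have hadd : ∀ p q : HModel, f (p * q) = f p + f q := by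
      intro p q; simp [hf]; ring
    have hb : ∀ s ∈ S, |f s| ≤ 1 := by
      intro s hs
      rcases (hmem s).mp hs with rfl | rfl | rfl | rfl <;>
        simp [hf, hv, A] <;> omega
    have hlow := abs_le_wordLen S ⟨hsym, hgen⟩ g f hadd hb
    have hgy : 1 ≤ |g.y| := by
      rcases abs_pos.mpr hy with h; omega
    have hfg : (M : ℤ) + 1 ≤ |f g| := by
      have h1 : |f g| = |g.x - n * g.y| := by rw [hf]
      have h2 : |n * g.y| - |g.x| ≤ |n * g.y - g.x| := abs_sub_abs_le_abs_sub _ _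
      have h3 : |n * g.y - g.x| = |g.x - n * g.y| := abs_sub_comm _ _
      have h4 : |n * g.y| = n * |g.y| := by rw [abs_mul, abs_of_nonneg hn0]
      have h5 : n * 1 ≤ n * |g.y| := by nlinarith
      have h6 : 0 ≤ |g.x| := abs_nonneg _
      omega
    have : (M : ℤ) < wordLen S g := by omega
    exact_mod_cast this

end HModel
namespace HModel

lemma gboundD_eq : GBoundD HModel 4 = (Subgroup.center HModel : Set HModel) := by
  ext g
  constructor
  · rintro ⟨M, hM, hall⟩
    rw [SetLike.mem_coe, center_eq, Subgroup.mem_zpowers_iff]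
    by_contra hng
    have hg : ¬(g.x = 0 ∧ g.y = 0) := by
      rintro ⟨h1, h2⟩
      exact hng ⟨g.z, by rw [C_zpow]; ext <;> simp [h1, h2]⟩
    obtain ⟨S, hS, hcard, hlt⟩ := unbounded g hg M
    exact absurd (hall S hS hcard) (by omega)
  · intro hg
    rw [SetLike.mem_coe, center_eq, Subgroup.mem_zpowers_iff] at hg
    obtain ⟨k, rfl⟩ := hg
    exact ⟨2 * k.natAbs + 2, by omega, fun S hS hcard => wordLen_Cpow_le k S hS hcard⟩

end HModel
section Transfer

variable {G G' : Type*} [Group G] [Group G'] [DecidableEq G] [DecidableEq G'] (e : G ≃* G')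

lemma wordLen_equiv (S : Finset G) (g : G) :
    wordLen (S.image e) (e g) = wordLen S g := by
  unfold wordLen
  congr 1
  ext n
  constructor
  · rintro ⟨w, hw, hlen, hprod⟩
    refine ⟨w.map e.symm, ?_, by simp [hlen], ?_⟩
    · intro s hs
      rw [List.mem_map] at hs
      obtain ⟨t, ht, rfl⟩ := hs
      obtain ⟨u, huS, rfl⟩ := Finset.mem_image.mp (hw t ht)
      simpa using huS
    · have hlp := map_list_prod e.symm.toMonoidHom w
      simp only [MulEquiv.coe_toMonoidHom] at hlp
      rw [← hlp, hprod]
      simp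
  · rintro ⟨w, hw, hlen, hprod⟩
    refine ⟨w.map e, ?_, by simp [hlen], ?_⟩
    · intro s hs
      rw [List.mem_map] at hs
      obtain ⟨t, ht, rfl⟩ := hs
      exact Finset.mem_image_of_mem e (hw t ht)
    · have hlp := map_list_prod e.toMonoidHom w
      simp only [MulEquiv.coe_toMonoidHom] at hlp
      rw [← hlp, hprod]

lemma isSymmGen_image {S : Finset G} (h : IsSymmGen S) : IsSymmGen (S.image e) := by
  constructor
  · intro s hs
    obtain ⟨t, htS, rfl⟩ := Finset.mem_image.mp hs
    rw [← map_inv]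
    exact Finset.mem_image_of_mem e (h.1 t htS)
  · rw [Finset.coe_image]
    have hmc := MonoidHom.map_closure e.toMonoidHom (S : Set G)
    simp only [MulEquiv.coe_toMonoidHom] at hmc
    rw [← hmc, h.2]
    exact Subgroup.map_top_of_surjective _ e.surjective

lemma image_symm_image (S : Finset G') : (S.image e.symm).image e = S := by
  rw [Finset.image_image]
  simp

lemma mem_center_equiv (g : G) :
    g ∈ Subgroup.center G ↔ e g ∈ Subgroup.center G' := by
  rw [Subgroup.mem_center_iff, Subgroup.mem_center_iff]
  constructor
  · intro h h'
    obtain ⟨h0, rfl⟩ := e.surjective h'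
    rw [← map_mul, ← map_mul, h h0]
  · intro h x
    apply e.injective
    rw [map_mul, map_mul, h (e x)]

lemma mem_gboundD_equiv (g : G) (d : ℕ) :
    g ∈ GBoundD G d ↔ e g ∈ GBoundD G' d := by
  constructor
  · rintro ⟨M, hM, hall⟩
    refine ⟨M, hM, fun S' hS' hcard' => ?_⟩
    have h1 : wordLen ((S'.image e.symm).image e) (e g) = wordLen (S'.image e.symm) g :=
      wordLen_equiv e _ g
    rw [image_symm_image] at h1
    rw [h1]
    exact hall _ (isSymmGen_image e.symm hS')
      (by rw [Finset.card_image_of_injective _ e.symm.injective]; exact hcard')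
  · rintro ⟨M, hM, hall⟩
    refine ⟨M, hM, fun S hS hcard => ?_⟩
    rw [← wordLen_equiv e S g]
    exact hall _ (isSymmGen_image e hS)
      (by rw [Finset.card_image_of_injective _ e.injective]; exact hcard)

lemma mem_zpowers_equiv (g h : G) :
    g ∈ Subgroup.zpowers h ↔ e g ∈ Subgroup.zpowers (e h) := by
  rw [Subgroup.mem_zpowers_iff, Subgroup.mem_zpowers_iff]
  constructor
  · rintro ⟨k, rfl⟩
    exact ⟨k, by rw [map_zpow]⟩
  · rintro ⟨k, hk⟩
    exact ⟨k, e.injective (by rw [map_zpow]; exact hk)⟩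

end Transfer
/-- In the Heisenberg group, `G_bound(4)` equals the center, which is the
infinite cyclic subgroup generated by `c`; moreover `l_S(c) ≤ 4` for every
symmetric generating set `S` of cardinality at most `4`. -/
theorem stmt18 :
    GBoundD Heisenberg 4 = (Subgroup.center Heisenberg : Set Heisenberg) ∧
    Subgroup.center Heisenberg =
      Subgroup.zpowers (PresentedGroup.of (rels := heisenbergRels) 2) ∧
    ¬ IsOfFinOrder (PresentedGroup.of (rels := heisenbergRels) 2) ∧
    (∀ S : Finset Heisenberg, IsSymmGen S → S.card ≤ 4 →
      wordLen S (PresentedGroup.of (rels := heisenbergRels) 2) ≤ 4) := by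
  haveI : DecidableEq Heisenberg := Classical.decEq _
  have hc : Heis.e Heis.c = HModel.C := Heis.e_c
  refine ⟨?_, ?_, ?_, ?_⟩
  · ext g
    constructor
    · intro h
      have h1 := (mem_gboundD_equiv Heis.e g 4).mp h
      rw [HModel.gboundD_eq] at h1
      exact SetLike.mem_coe.mpr ((mem_center_equiv Heis.e g).mpr (SetLike.mem_coe.mp h1))
    · intro h
      apply (mem_gboundD_equiv Heis.e g 4).mpr
      rw [HModel.gboundD_eq]
      exact SetLike.mem_coe.mpr ((mem_center_equiv Heis.e g).mp (SetLike.mem_coe.mp h))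
  · ext g
    show g ∈ Subgroup.center Heisenberg ↔ g ∈ Subgroup.zpowers Heis.c
    rw [mem_center_equiv Heis.e g, mem_zpowers_equiv Heis.e g Heis.c, hc,
      ← HModel.center_eq]
  · intro h
    have h2 : IsOfFinOrder (Heis.e Heis.c) := Heis.e.toMonoidHom.isOfFinOrder h
    rw [hc] at h2
    exact HModel.C_not_finOrder h2
  · intro S hS hcard
    show wordLen S Heis.c ≤ 4
    rw [← wordLen_equiv Heis.e S Heis.c, hc]
    exact HModel.wordLen_C_le _ (isSymmGen_image Heis.e hS)
      (by rw [Finset.card_image_of_injective _ Heis.e.injective]; exact hcard)
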